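/- Let Z be an n×n positive definite similarity matrix, α ≥ 2 real, m ≥ 1, weights w ∈ Δ_m with all w_a > 0, and distributions p^1, …, p^m ∈ Δ_n°. Let C_1, …, C_k be a partition of the index set {1,…,m}, let W_c = Σ_{a ∈ C_c} w_a, and let μ_c = (1/W_c) Σ_{a ∈ C_c} w_a p^a be the cluster means. Then the total Bregman information decomposes as the between-cluster plus within-cluster informations: I_α^Z((p^a)_{a=1..m}; w) = I_α^Z((μ_c)_{c=1..k}; (W_c)_{c=1..k}) + Σ_{c=1}^k W_c · I_α^Z((p^a)_{a ∈ C_c}; (w_a/W_c)_{a ∈ C_c}). -/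

import Mathlib

open Matrix Finset

/-- `Z` is a similarity matrix: entries in `[0,1]`, symmetric, unit diagonal. -/
def IsSimilarityMatrix {n : ℕ} (Z : Matrix (Fin n) (Fin n) ℝ) : Prop :=
  (∀ i j, 0 ≤ Z i j ∧ Z i j ≤ 1) ∧ Zᵀ = Z ∧ (∀ i, Z i i = 1)

/-- `Z` is positive definite: `xᵀ Z x > 0` for every nonzero `x`. -/
def IsPosDefMat {n : ℕ} (Z : Matrix (Fin n) (Fin n) ℝ) : Prop :=
  ∀ x : Fin n → ℝ, x ≠ 0 → 0 < x ⬝ᵥ Z.mulVec x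

/-- The relative interior `Δₙ°` of the probability simplex. -/
def simplexInterior (n : ℕ) : Set (Fin n → ℝ) :=
  {p | (∑ i, p i) = 1 ∧ ∀ i, 0 < p i}

/-- Structure-aware Havrda–Charvát entropy of order `α`. -/
noncomputable def Hent {n : ℕ} (Z : Matrix (Fin n) (Fin n) ℝ) (α : ℝ) (p : Fin n → ℝ) : ℝ :=
  if α = 1 then -∑ i, p i * Real.log (Z.mulVec p i)
  else (1 / (α - 1)) * (1 - ∑ i, p i * (Z.mulVec p i) ^ (α - 1))

/-- Structure-aware divergence of order `α` of `p` from `q`. -/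
noncomputable def saDiv {n : ℕ} (Z : Matrix (Fin n) (Fin n) ℝ) (α : ℝ) (p q : Fin n → ℝ) : ℝ :=
  (1 / (α - 1)) * ∑ i, p i * ((Z.mulVec p i) ^ (α - 1) - (Z.mulVec q i) ^ (α - 1))
    - ∑ i, q i * (Z.mulVec q i) ^ (α - 2) * (Z.mulVec (p - q) i)


noncomputable def phiF {n : ℕ} (Z : Matrix (Fin n) (Fin n) ℝ) (α : ℝ) (p : Fin n → ℝ) : ℝ :=
  (1 / (α - 1)) * ∑ i, p i * (Z.mulVec p i) ^ (α - 1)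

noncomputable def LF {n : ℕ} (Z : Matrix (Fin n) (Fin n) ℝ) (α : ℝ) (q : Fin n → ℝ) :
    (Fin n → ℝ) →ₗ[ℝ] ℝ where
  toFun p := (1 / (α - 1)) * ∑ i, p i * (Z.mulVec q i) ^ (α - 1)
    + ∑ i, q i * (Z.mulVec q i) ^ (α - 2) * Z.mulVec p i
  map_add' p r := by
    simp [Matrix.mulVec_add, Pi.add_apply, add_mul, mul_add, Finset.sum_add_distrib]
    ring
  map_smul' a p := by
    simp only [Pi.smul_apply, smul_eq_mul, RingHom.id_apply, Matrix.mulVec_smul,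
      Finset.mul_sum, mul_add]
    ring_nf

lemma saDiv_expand {n : ℕ} (Z : Matrix (Fin n) (Fin n) ℝ) (α : ℝ) (p q : Fin n → ℝ) :
    saDiv Z α p q = phiF Z α p - LF Z α q p
      + ∑ i, q i * (Z.mulVec q i) ^ (α - 2) * Z.mulVec q i := by
  simp only [saDiv, phiF, LF, LinearMap.coe_mk, AddHom.coe_mk, Matrix.mulVec_sub,
    Pi.sub_apply, mul_sub, Finset.sum_sub_distrib]
  ring

lemma saDiv_self {n : ℕ} (Z : Matrix (Fin n) (Fin n) ℝ) (α : ℝ) (q : Fin n → ℝ) :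
    saDiv Z α q q = 0 := by
  simp [saDiv, sub_self, Matrix.mulVec_zero]

lemma sum_saDiv {m n : ℕ} (Z : Matrix (Fin n) (Fin n) ℝ) (α : ℝ) (S : Finset (Fin m))
    (w : Fin m → ℝ) (p : Fin m → Fin n → ℝ) (q μ : Fin n → ℝ)
    (hμ : (∑ a ∈ S, w a) • μ = ∑ a ∈ S, w a • p a) :
    ∑ a ∈ S, w a * saDiv Z α (p a) q
      = (∑ a ∈ S, w a) * saDiv Z α μ q
        + ((∑ a ∈ S, w a * phiF Z α (p a)) - (∑ a ∈ S, w a) * phiF Z α μ) := by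
  have hL : (∑ a ∈ S, w a) * LF Z α q μ = ∑ a ∈ S, w a * LF Z α q (p a) := by
    have h1 : LF Z α q ((∑ a ∈ S, w a) • μ) = (∑ a ∈ S, w a) * LF Z α q μ := by
      simp
    rw [hμ, map_sum] at h1
    simp only [LinearMap.map_smul, smul_eq_mul] at h1
    exact h1.symm
  have h2 : ∑ a ∈ S, w a * saDiv Z α (p a) q
      = (∑ a ∈ S, w a * phiF Z α (p a)) - (∑ a ∈ S, w a * LF Z α q (p a))
        + (∑ a ∈ S, w a) * ∑ i, q i * (Z.mulVec q i) ^ (α - 2) * Z.mulVec q i := by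
    rw [Finset.sum_mul, ← Finset.sum_sub_distrib, ← Finset.sum_add_distrib]
    exact Finset.sum_congr rfl fun a _ => by rw [saDiv_expand]; ring
  rw [h2, saDiv_expand]
  linear_combination hL

lemma cluster_step {m n : ℕ} (Z : Matrix (Fin n) (Fin n) ℝ) (α : ℝ) (S : Finset (Fin m))
    (w : Fin m → ℝ) (p : Fin m → Fin n → ℝ) (q μ : Fin n → ℝ)
    (hμ : (∑ a ∈ S, w a) • μ = ∑ a ∈ S, w a • p a) :
    ∑ a ∈ S, w a * saDiv Z α (p a) q
      = (∑ a ∈ S, w a) * saDiv Z α μ q + ∑ a ∈ S, w a * saDiv Z α (p a) μ := by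
  have h1 := sum_saDiv Z α S w p q μ hμ
  have h2 := sum_saDiv Z α S w p μ μ hμ
  rw [saDiv_self] at h2
  linarith

/-- the total Bregman information decomposes as the between-cluster
plus the within-cluster Bregman informations, for any partition of the index set
(encoded by a surjective cluster assignment `c`). -/
theorem bregman_information_decomposition {n : ℕ} (Z : Matrix (Fin n) (Fin n) ℝ)
    (hZ : IsSimilarityMatrix Z) (hpd : IsPosDefMat Z) (α : ℝ) (hα : 2 ≤ α)
    (m k : ℕ) (hm : 1 ≤ m) (w : Fin m → ℝ) (hw1 : (∑ a, w a) = 1) (hw : ∀ a, 0 < w a)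
    (p : Fin m → Fin n → ℝ) (hp : ∀ a, p a ∈ simplexInterior n)
    (c : Fin m → Fin k) (hc : Function.Surjective c) :
    ∑ a, w a * saDiv Z α (p a) (∑ b, w b • p b)
      = (∑ cl,
            (∑ a ∈ Finset.univ.filter (fun a => c a = cl), w a)
              * saDiv Z α
                  ((∑ a ∈ Finset.univ.filter (fun a => c a = cl), w a)⁻¹ •
                    ∑ a ∈ Finset.univ.filter (fun a => c a = cl), w a • p a)
                  (∑ b, w b • p b))
        + ∑ cl,
            (∑ a ∈ Finset.univ.filter (fun a => c a = cl), w a)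
              * ∑ a ∈ Finset.univ.filter (fun a => c a = cl),
                  (w a / ∑ b ∈ Finset.univ.filter (fun b => c b = cl), w b)
                    * saDiv Z α (p a)
                        ((∑ b ∈ Finset.univ.filter (fun b => c b = cl), w b)⁻¹ •
                          ∑ b ∈ Finset.univ.filter (fun b => c b = cl), w b • p b) := by
  classical
  rw [← Finset.sum_fiberwise Finset.univ c (fun a => w a * saDiv Z α (p a) (∑ b, w b • p b)),
    ← Finset.sum_add_distrib]
  refine Finset.sum_congr rfl fun cl _ => ?_
  set S : Finset (Fin m) := Finset.univ.filter (fun a => c a = cl) with hSdef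
  have hS : S.Nonempty := by
    obtain ⟨a, ha⟩ := hc cl
    exact ⟨a, by simp [hSdef, ha]⟩
  have hW : 0 < ∑ a ∈ S, w a := Finset.sum_pos (fun a _ => hw a) hS
  have hμ : (∑ a ∈ S, w a) • ((∑ a ∈ S, w a)⁻¹ • ∑ a ∈ S, w a • p a) = ∑ a ∈ S, w a • p a :=
    smul_inv_smul₀ hW.ne' _
  rw [cluster_step Z α S w p (∑ b, w b • p b) _ hμ]
  congr 1
  rw [Finset.mul_sum]
  refine Finset.sum_congr rfl fun a _ => ?_
  have hne : (∑ b ∈ S, w b) ≠ 0 := hW.ne'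
  field_simp
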